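/- For all integers n ≥ 1 and 0 ≤ j ≤ k ≤ n, the number of elements a of the poset P_{t_n} with nz(a) = j and ht(a) = k equals: C(n, j) if j = k; C(n-1, j-1) if 1 ≤ j < k; and 0 if j = 0 < k. -/

import Mathlib

/-- The poset `P_{t_n}`: lattice points `a ∈ ℕ^n` with `a i ≤ 1` for the first
`n - 1` coordinates and total coordinate sum at most `n`, ordered coordinatewise. -/
def Ptn (n : ℕ) : Set (Fin n → ℕ) :=
  {a | (∀ i : Fin n, (i : ℕ) < n - 1 → a i ≤ 1) ∧ ∑ i, a i ≤ n}

lemma sum_eq_card_filter {n : ℕ} (t : Finset (Fin n)) (a : Fin n → ℕ)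
    (h : ∀ i ∈ t, a i ≤ 1) :
    ∑ i ∈ t, a i = (t.filter fun i => a i ≠ 0).card := by
  rw [← Finset.sum_filter_ne_zero, Finset.card_eq_sum_ones]
  refine Finset.sum_congr rfl fun i hi => ?_
  simp only [Finset.mem_filter] at hi
  have := h i hi.1
  omega

lemma all_le_one {n : ℕ} (a : Fin n → ℕ)
    (h : ∑ i, a i ≤ (Finset.univ.filter fun i => a i ≠ 0).card) :
    ∀ i, a i ≤ 1 := by
  by_contra hc
  push_neg at hc
  obtain ⟨i0, hi0⟩ := hc
  have h2 : ∑ i ∈ Finset.univ.filter (fun i => a i ≠ 0), a i = ∑ i, a i :=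
    Finset.sum_filter_ne_zero _
  have h1 : (Finset.univ.filter fun i => a i ≠ 0).card
      < ∑ i ∈ Finset.univ.filter (fun i => a i ≠ 0), a i := by
    rw [Finset.card_eq_sum_ones]
    refine Finset.sum_lt_sum (fun i hi => ?_) ⟨i0, ?_, ?_⟩
    · simp only [Finset.mem_filter] at hi; omega
    · simp only [Finset.mem_filter, Finset.mem_univ, true_and]; omega
    · omega
  omega

def indic (n : ℕ) (s : Finset (Fin n)) : Fin n → ℕ := fun i => if i ∈ s then 1 else 0

lemma indic_sum {n : ℕ} (s : Finset (Fin n)) : ∑ i, indic n s i = s.card := by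
  simp only [indic]
  rw [Finset.sum_ite_mem, Finset.univ_inter, Finset.card_eq_sum_ones]

lemma indic_filter {n : ℕ} (s : Finset (Fin n)) :
    (Finset.univ.filter fun i => indic n s i ≠ 0) = s := by
  ext i
  simp only [Finset.mem_filter, Finset.mem_univ, true_and, indic]
  by_cases h : i ∈ s <;> simp [h]

lemma case1 (n j : ℕ) (hn : 1 ≤ n) (hj : j ≤ n) :
    Nat.card {a : Fin n → ℕ // a ∈ Ptn n ∧
        (Finset.univ.filter fun i => a i ≠ 0).card = j ∧ ∑ i, a i = j} =
      Nat.choose n j := by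
  have hcard : (Finset.powersetCard j (Finset.univ : Finset (Fin n))).card = n.choose j := by
    simp [Finset.card_powersetCard]
  rw [← hcard, ← Fintype.card_coe, ← Nat.card_eq_fintype_card]
  refine (Nat.card_eq_of_bijective
    (fun s => ⟨indic n s.1, ⟨fun i _ => by simp [indic]; split <;> omega,
      by rw [indic_sum, Finset.mem_powersetCard_univ.mp s.2]; exact hj⟩,
      by rw [indic_filter, Finset.mem_powersetCard_univ.mp s.2],
      by rw [indic_sum, Finset.mem_powersetCard_univ.mp s.2]⟩) ⟨?_, ?_⟩).symm
  · rintro ⟨s, hs⟩ ⟨t, ht⟩ h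
    simp only [Subtype.mk.injEq] at h ⊢
    ext i
    have := congrFun h i
    simp only [indic] at this
    by_cases h1 : i ∈ s <;> by_cases h2 : i ∈ t <;> simp_all
  · rintro ⟨a, ⟨hbd, hle⟩, hnz, hsum⟩
    have hle1 : ∀ i, a i ≤ 1 := all_le_one a (by omega)
    refine ⟨⟨Finset.univ.filter fun i => a i ≠ 0, Finset.mem_powersetCard_univ.mpr hnz⟩, ?_⟩
    simp only [Subtype.mk.injEq]
    funext i
    simp only [indic, Finset.mem_filter, Finset.mem_univ, true_and]
    have := hle1 i
    split <;> omega

def indic2 (n k j : ℕ) (s : Finset (Fin n)) : Fin n → ℕ :=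
  fun i => if i ∈ s then 1 else if (i : ℕ) = n - 1 then k - j + 1 else 0

lemma case2 (n j k : ℕ) (hn : 1 ≤ n) (hj : 1 ≤ j) (hjk : j < k) (hk : k ≤ n) :
    Nat.card {a : Fin n → ℕ // a ∈ Ptn n ∧
        (Finset.univ.filter fun i => a i ≠ 0).card = j ∧ ∑ i, a i = k} =
      Nat.choose (n - 1) (j - 1) := by
  set L : Fin n := ⟨n - 1, by omega⟩ with hL
  have hLval : (L : ℕ) = n - 1 := rfl
  have hLne : ∀ i : Fin n, i ≠ L → (i : ℕ) ≠ n - 1 := by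
    intro i hi hc
    exact hi (Fin.ext hc)
  have hLlt : ∀ i : Fin n, i ≠ L → (i : ℕ) < n - 1 := by
    intro i hi
    have := i.isLt
    have := hLne i hi
    omega
  have hD : (Finset.univ.erase L).card = n - 1 := by
    rw [Finset.card_erase_of_mem (Finset.mem_univ L), Finset.card_univ, Fintype.card_fin]
  have hcard : ((Finset.univ.erase L).powersetCard (j - 1)).card = (n-1).choose (j-1) := by
    rw [Finset.card_powersetCard, hD]
  rw [← hcard, ← Fintype.card_coe, ← Nat.card_eq_fintype_card]
  have hmem : ∀ s : Finset (Fin n), s ∈ (Finset.univ.erase L).powersetCard (j - 1) →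
      s.card = j - 1 ∧ L ∉ s := by
    intro s hs
    rw [Finset.mem_powersetCard] at hs
    refine ⟨hs.2, fun hc => ?_⟩
    have := hs.1 hc
    simp at this
  -- key computations about indic2
  have hval_ne : ∀ (s : Finset (Fin n)) (i : Fin n), i ≠ L →
      indic2 n k j s i = if i ∈ s then 1 else 0 := by
    intro s i hi
    simp only [indic2]
    rw [if_neg (hLne i hi)]
  have hsum2 : ∀ s : Finset (Fin n), s.card = j - 1 → L ∉ s →
      ∑ i, indic2 n k j s i = k := by
    intro s hsc hsL
    rw [← Finset.sum_erase_add _ _ (Finset.mem_univ L)]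
    have h1 : ∑ i ∈ Finset.univ.erase L, indic2 n k j s i = ∑ i ∈ Finset.univ.erase L, (if i ∈ s then 1 else 0) := by
      refine Finset.sum_congr rfl fun i hi => ?_
      exact hval_ne s i (Finset.ne_of_mem_erase hi)
    have h2 : indic2 n k j s L = k - j + 1 := by
      simp only [indic2, if_neg hsL]
      simp; exact hLval
    rw [h1, h2, Finset.sum_ite_mem]
    have h3 : Finset.univ.erase L ∩ s = s := by
      refine Finset.inter_eq_right.mpr fun i hi => ?_
      exact Finset.mem_erase.mpr ⟨fun hc => hsL (hc ▸ hi), Finset.mem_univ i⟩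
    rw [h3, Finset.sum_const, smul_eq_mul, mul_one, hsc]
    omega
  have hfilter2 : ∀ s : Finset (Fin n), s.card = j - 1 → L ∉ s →
      (Finset.univ.filter fun i => indic2 n k j s i ≠ 0) = insert L s := by
    intro s hsc hsL
    ext i
    simp only [Finset.mem_filter, Finset.mem_univ, true_and, Finset.mem_insert]
    by_cases hi : i = L
    · subst hi
      rw [show indic2 n k j s L = k - j + 1 by
        simp only [indic2, if_neg hsL]; simp; exact hLval]
      constructor
      · intro _; left; rfl
      · intro _; omega
    · rw [hval_ne s i hi]
      constructor
      · intro h; right; by_contra hc; simp [hc] at h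
      · rintro (h | h); · exact absurd h hi
        simp [h]
  refine (Nat.card_eq_of_bijective
    (fun s => ⟨indic2 n k j s.1,
      ⟨fun i hi => by
        rw [hval_ne s.1 i (by intro hc; subst hc; rw [hLval] at hi; omega)]
        split <;> omega,
       by rw [hsum2 s.1 (hmem s.1 s.2).1 (hmem s.1 s.2).2]; exact hk⟩,
      by rw [hfilter2 s.1 (hmem s.1 s.2).1 (hmem s.1 s.2).2,
             Finset.card_insert_of_notMem (hmem s.1 s.2).2, (hmem s.1 s.2).1]; omega,
      hsum2 s.1 (hmem s.1 s.2).1 (hmem s.1 s.2).2⟩) ⟨?_, ?_⟩).symm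
  · rintro ⟨s, hs⟩ ⟨t, ht⟩ h
    obtain ⟨hsc, hsL⟩ := hmem s hs
    obtain ⟨htc, htL⟩ := hmem t ht
    simp only [Subtype.mk.injEq] at h ⊢
    ext i
    have hi := congrFun h i
    constructor
    · intro his
      have hiL : i ≠ L := fun hc => hsL (hc ▸ his)
      rw [hval_ne s i hiL, hval_ne t i hiL, if_pos his] at hi
      by_contra hc
      rw [if_neg hc] at hi
      omega
    · intro hit
      have hiL : i ≠ L := fun hc => htL (hc ▸ hit)
      rw [hval_ne s i hiL, hval_ne t i hiL, if_pos hit] at hi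
      by_contra hc
      rw [if_neg hc] at hi
      omega
  · rintro ⟨a, ⟨hbd, hle⟩, hnz, hsum⟩
    -- a L ≥ 2
    have hbd' : ∀ i : Fin n, i ≠ L → a i ≤ 1 := fun i hi => hbd i (hLlt i hi)
    have haL : 2 ≤ a L := by
      by_contra hc
      push_neg at hc
      have hall : ∀ i ∈ (Finset.univ : Finset (Fin n)), a i ≤ 1 := by
        intro i _
        by_cases hi : i = L
        · subst hi; omega
        · exact hbd' i hi
      have := sum_eq_card_filter Finset.univ a hall
      omega
    have hLf : L ∈ Finset.univ.filter fun i => a i ≠ 0 := by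
      simp only [Finset.mem_filter, Finset.mem_univ, true_and]; omega
    set s : Finset (Fin n) := (Finset.univ.filter fun i => a i ≠ 0).erase L with hsdef
    have hsc : s.card = j - 1 := by
      rw [hsdef, Finset.card_erase_of_mem hLf, hnz]
    have hsL : L ∉ s := Finset.notMem_erase _ _
    have hssub : s ∈ (Finset.univ.erase L).powersetCard (j - 1) := by
      rw [Finset.mem_powersetCard]
      exact ⟨fun i hi => Finset.mem_erase.mpr ⟨Finset.ne_of_mem_erase hi, Finset.mem_univ i⟩, hsc⟩
    refine ⟨⟨s, hssub⟩, ?_⟩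
    simp only [Subtype.mk.injEq]
    -- compute a L
    have hsum_er : ∑ i ∈ Finset.univ.erase L, a i = j - 1 := by
      rw [sum_eq_card_filter _ a (fun i hi => hbd' i (Finset.ne_of_mem_erase hi))]
      rw [← hsc, hsdef]
      congr 1
      ext i
      simp only [Finset.mem_filter, Finset.mem_erase, Finset.mem_univ, true_and]
      tauto
    have hsplit : ∑ i ∈ Finset.univ.erase L, a i + a L = k := by
      rw [Finset.sum_erase_add _ _ (Finset.mem_univ L)]; exact hsum
    have haLval : a L = k - j + 1 := by omega
    funext i
    by_cases hi : i = L
    · subst hi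
      rw [show indic2 n k j s L = k - j + 1 by
        simp only [indic2, if_neg hsL]; simp; exact hLval]
      exact haLval.symm
    · rw [hval_ne s i hi]
      have := hbd' i hi
      have hmem_iff : i ∈ s ↔ a i ≠ 0 := by
        rw [hsdef]
        simp only [Finset.mem_erase, Finset.mem_filter, Finset.mem_univ, true_and]
        tauto
      split
      · next h => have := hmem_iff.mp h; omega
      · next h => have : ¬ a i ≠ 0 := fun hc => h (hmem_iff.mpr hc); omega

/-- For all integers `n ≥ 1` and `0 ≤ j ≤ k ≤ n`, the number of elements `a` of `P_{t_n}`
with `nz(a) = j` (number of nonzero coordinates) and `ht(a) = k` (coordinate sum) equals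
`C(n, j)` if `j = k`, `C(n-1, j-1)` if `1 ≤ j < k`, and `0` if `j = 0 < k`. -/
theorem stmt3 (n j k : ℕ) (hn : 1 ≤ n) (hjk : j ≤ k) (hk : k ≤ n) :
    Nat.card {a : Fin n → ℕ // a ∈ Ptn n ∧
        (Finset.univ.filter fun i => a i ≠ 0).card = j ∧ ∑ i, a i = k} =
      if j = k then Nat.choose n j
      else if 1 ≤ j then Nat.choose (n - 1) (j - 1)
      else 0 := by
  split_ifs with h1 h2
  · subst h1
    exact case1 n j hn (le_trans hjk hk)
  · exact case2 n j k hn h2 (by omega) hk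
  · have hj0 : j = 0 := by omega
    have hk0 : 0 < k := by omega
    have : IsEmpty {a : Fin n → ℕ // a ∈ Ptn n ∧
        (Finset.univ.filter fun i => a i ≠ 0).card = j ∧ ∑ i, a i = k} := by
      refine ⟨fun x => ?_⟩
      obtain ⟨a, hmem, hnz, hsum⟩ := x
      rw [hj0, Finset.card_eq_zero] at hnz
      have hz : ∑ i, a i = 0 := by
        refine Finset.sum_eq_zero fun i _ => ?_
        by_contra hc
        have : i ∈ Finset.univ.filter fun i => a i ≠ 0 := by
          simp only [Finset.mem_filter, Finset.mem_univ, true_and]; exact hc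
        rw [hnz] at this
        simp at this
      omega
    simp [Nat.card_of_isEmpty]
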